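/- Let 𝔽_q be a finite field of characteristic p, let e ≥ 1 with p not dividing e, let k be a natural number, and let f ∈ 𝔽_q[X] be a monic polynomial dividing X^e - 1. Set W = 𝔽_q[Z]/⟨Z^{p^k} - 1⟩. Then there exists a ring isomorphism between 𝔽_q[X]/⟨Polynomial.expand (p^k) f⟩ and W[Y]/⟨f_W⟩, where f_W denotes the image of f in W[Y] under the coefficient map 𝔽_q → W. -/

import Mathlib

open Polynomial

private lemma pow_congr_of_modEq {M : Type*} [Monoid M] {y : M} {e : ℕ} (hy : y ^ e = 1)
    {m m' : ℕ} (h : m ≡ m' [MOD e]) : y ^ m = y ^ m' := by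
  have key : ∀ t : ℕ, y ^ t = y ^ (t % e) := fun t => by
    conv_lhs => rw [← Nat.div_add_mod t e]
    rw [pow_add, pow_mul, hy, one_pow, one_mul]
  rw [key m, key m']
  exact congrArg (y ^ ·) h

private lemma exists_nat_inv {n e : ℕ} (he : 1 ≤ e) (h : Nat.Coprime n e) :
    ∃ a : ℕ, a * n ≡ 1 [MOD e] := by
  rcases he.lt_or_eq with h1 | h1
  · obtain ⟨m, -, hm⟩ := Nat.exists_mul_mod_eq_one_of_coprime h h1
    exact ⟨m, show m * n % e = 1 % e by rw [Nat.mul_comm, hm, Nat.mod_eq_of_lt h1]⟩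
  · exact ⟨1, by rw [← h1]; exact Nat.modEq_one⟩

noncomputable instance {K : Type*} [Field K] (I : Ideal K[X]) : CommRing (K[X] ⧸ I) :=
  Ideal.Quotient.commRing I

/-- Let `𝔽_q` have characteristic `p`, `p ∤ e`, and let `f` be monic dividing `X^e - 1`.
With `W = 𝔽_q[Z]/⟨Z^(p^k) - 1⟩`, there is a ring isomorphism
`𝔽_q[X]/⟨f(X^(p^k))⟩ ≃ W[Y]/⟨f_W⟩`. -/
theorem expand_quotient_iso_chain_ring {K : Type*} [Field K] [Fintype K]
    (p : ℕ) (hp : p.Prime) [CharP K p] (e : ℕ) (he : 1 ≤ e) (hpe : ¬ p ∣ e)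
    (k : ℕ) (f : K[X]) (hf : f.Monic) (hdvd : f ∣ X ^ e - 1) :
    Nonempty
      ((K[X] ⧸ Ideal.span {Polynomial.expand K (p ^ k) f}) ≃+*
        ((K[X] ⧸ Ideal.span {(X : K[X]) ^ p ^ k - 1})[X] ⧸
          Ideal.span
            {f.map (algebraMap K (K[X] ⧸ Ideal.span {(X : K[X]) ^ p ^ k - 1}))})) := by
  classical
  set n := p ^ k with hndef
  have hn0 : 1 ≤ n := Nat.one_le_iff_ne_zero.mpr (pow_ne_zero k hp.pos.ne')
  have hcop : Nat.Coprime n e := Nat.Coprime.pow_left k (hp.coprime_iff_not_dvd.mpr hpe)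
  obtain ⟨a, ha⟩ := exists_nat_inv he hcop
  obtain ⟨b, hb⟩ := exists_nat_inv hn0 hcop.symm
  -- rings
  let A := AdjoinRoot (Polynomial.expand K n f)
  let x : A := AdjoinRoot.root _
  let W := AdjoinRoot ((X : K[X]) ^ n - 1)
  let w : W := AdjoinRoot.root _
  let fW : W[X] := f.map (algebraMap K W)
  let B := AdjoinRoot fW
  let y : B := AdjoinRoot.root fW
  let z : B := algebraMap W B w
  -- basic relations
  have hxen : x ^ (e * n) = 1 := by
    have h1 : Polynomial.expand K n ((X : K[X]) ^ e - 1) = (X : K[X]) ^ (e * n) - 1 := by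
      rw [map_sub, map_one, map_pow, Polynomial.expand_X, ← pow_mul, mul_comm n e]
    have h2 : Polynomial.expand K n f ∣ (X : K[X]) ^ (e * n) - 1 :=
      by obtain ⟨g, hg⟩ := hdvd; exact ⟨Polynomial.expand K n g, by rw [← h1, hg, map_mul]⟩
    have h3 := AdjoinRoot.aeval_eq (f := Polynomial.expand K n f) ((X : K[X]) ^ (e * n) - 1)
    rw [AdjoinRoot.mk_eq_zero.mpr h2, map_sub, map_one, map_pow, aeval_X] at h3
    exact sub_eq_zero.mp h3
  have hwn : w ^ n = 1 := by
    have h3 := AdjoinRoot.aeval_eq (f := (X : K[X]) ^ n - 1) ((X : K[X]) ^ n - 1)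
    rw [AdjoinRoot.mk_self, map_sub, map_one, map_pow, aeval_X] at h3
    exact sub_eq_zero.mp h3
  have hzn : z ^ n = 1 := by
    show (algebraMap W B w) ^ n = 1
    rw [← map_pow, hwn, map_one]
  have hye : y ^ e = 1 := by
    have hdvdW : fW ∣ (X : W[X]) ^ e - 1 := by
      have h := Polynomial.map_dvd (algebraMap K W) hdvd
      simpa [Polynomial.map_sub, Polynomial.map_pow, Polynomial.map_one] using h
    have h3 := AdjoinRoot.aeval_eq (f := fW) ((X : W[X]) ^ e - 1)
    rw [AdjoinRoot.mk_eq_zero.mpr hdvdW, map_sub, map_one, map_pow, aeval_X] at h3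
    exact sub_eq_zero.mp h3
  -- the element u and the map ψ : A →ₐ[K] B
  let u : B := y ^ a * z
  have hun : u ^ n = y := by
    show (y ^ a * z) ^ n = y
    rw [mul_pow, hzn, mul_one, ← pow_mul]
    have h := pow_congr_of_modEq hye ha
    rwa [pow_one, mul_comm a n, mul_comm n a] at h
  have haevalyf : aeval y f = 0 := by
    rw [aeval_def, IsScalarTower.algebraMap_eq K W B, ← Polynomial.eval₂_map, ← aeval_def,
      AdjoinRoot.aeval_eq, AdjoinRoot.mk_self]
  have hufn : aeval u (Polynomial.expand K n f) = 0 := by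
    rw [Polynomial.expand_aeval, hun, haevalyf]
  let ψ : A →ₐ[K] B := AdjoinRoot.liftAlgHom _ (Algebra.ofId K B) u hufn
  have hψx : ψ x = u := AdjoinRoot.liftAlgHom_root _ (Algebra.ofId K B) u hufn
  -- the map ρ : W →ₐ[K] A
  have hρwd : aeval (x ^ (b * e)) ((X : K[X]) ^ n - 1) = 0 := by
    simp only [map_sub, map_pow, aeval_X, map_one, sub_eq_zero]
    rw [← pow_mul, show b * e * n = e * n * b by ring, pow_mul, hxen, one_pow]
  let ρ : W →ₐ[K] A := AdjoinRoot.liftAlgHom _ (Algebra.ofId K A) (x ^ (b * e)) hρwd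
  have hρw : ρ w = x ^ (b * e) := AdjoinRoot.liftAlgHom_root _ (Algebra.ofId K A) (x ^ (b * e)) hρwd
  letI : Algebra W A := ρ.toRingHom.toAlgebra
  haveI : IsScalarTower K W A := IsScalarTower.of_algebraMap_eq fun c => (ρ.commutes c).symm
  -- the map φ : B →ₐ[K] A
  have hφwd : aeval (x ^ n) fW = 0 := by
    rw [aeval_def, show algebraMap W A = ρ.toRingHom from rfl, Polynomial.eval₂_map,
      show ρ.toRingHom.comp (algebraMap K W) = algebraMap K A from RingHom.ext fun c => ρ.commutes c,
      ← aeval_def, ← Polynomial.expand_aeval, AdjoinRoot.aeval_eq, AdjoinRoot.mk_self]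
  let φ0 : B →ₐ[W] A := AdjoinRoot.liftAlgHom fW (Algebra.ofId W A) (x ^ n) hφwd
  let φ : B →ₐ[K] A := φ0.restrictScalars K
  have hφy : φ y = x ^ n := AdjoinRoot.liftAlgHom_root fW (Algebra.ofId W A) (x ^ n) hφwd
  have hφalg : ∀ c : W, φ (algebraMap W B c) = ρ c := fun c => φ0.commutes c
  have hφz : φ z = x ^ (b * e) := by rw [show z = algebraMap W B w from rfl, hφalg, hρw]
  -- φ ∘ ψ = id
  have hcomp1 : φ.comp ψ = AlgHom.id K A := by
    apply AdjoinRoot.algHom_ext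
    rw [AlgHom.comp_apply, AlgHom.id_apply]
    show φ (ψ x) = x
    rw [hψx, show u = y ^ a * z from rfl, map_mul, map_pow, hφy, hφz, ← pow_mul, ← pow_add]
    have hmod : n * a + b * e ≡ 1 [MOD e * n] := by
      have h1 : n * a + b * e ≡ 1 [MOD e] := by
        have hx1 : n * a ≡ 1 [MOD e] := by rwa [mul_comm n a]
        have hx2 : b * e ≡ 0 [MOD e] := (Nat.modEq_zero_iff_dvd).mpr (dvd_mul_left e b)
        simpa using hx1.add hx2
      have h2 : n * a + b * e ≡ 1 [MOD n] := by
        have hx1 : n * a ≡ 0 [MOD n] := (Nat.modEq_zero_iff_dvd).mpr (dvd_mul_right n a)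
        have hx2 : b * e ≡ 1 [MOD n] := hb
        simpa using hx1.add hx2
      exact (Nat.modEq_and_modEq_iff_modEq_mul hcop.symm).mp ⟨h1, h2⟩
    have h := pow_congr_of_modEq hxen hmod
    rwa [pow_one] at h
  -- ψ ∘ ρ = algebraMap W B
  have hψρ : ∀ c : W, ψ (ρ c) = algebraMap W B c := by
    have hext : ψ.comp ρ = IsScalarTower.toAlgHom K W B := by
      apply AdjoinRoot.algHom_ext
      rw [AlgHom.comp_apply, IsScalarTower.toAlgHom_apply]
      show ψ (ρ w) = algebraMap W B w
      rw [hρw, map_pow, hψx]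
      show (y ^ a * z) ^ (b * e) = z
      rw [mul_pow, ← pow_mul]
      have h1 : y ^ (a * (b * e)) = 1 := by
        have hmod : a * (b * e) ≡ 0 [MOD e] :=
          (Nat.modEq_zero_iff_dvd).mpr ⟨a * b, by ring⟩
        have h := pow_congr_of_modEq hye hmod
        simpa using h
      rw [h1, one_mul]
      have h := pow_congr_of_modEq hzn hb
      rwa [pow_one] at h
    intro c
    have := AlgHom.congr_fun hext c
    rwa [IsScalarTower.toAlgHom_apply] at this
  -- ψ ∘ φ = id
  have hcomp2 : ψ.comp φ = AlgHom.id K B := by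
    apply AlgHom.ext
    intro t
    induction t using AdjoinRoot.induction_on with
    | ih q =>
      rw [AlgHom.comp_apply, AlgHom.id_apply]
      induction q using Polynomial.induction_on' with
      | add r s hr hs => rw [map_add, map_add, map_add, hr, hs]
      | monomial m c =>
        have key1 : ψ (φ (algebraMap W B c)) = algebraMap W B c := by rw [hφalg, hψρ]
        have key2 : ψ (φ y) = y := by rw [hφy, map_pow, hψx, hun]
        rw [← Polynomial.C_mul_X_pow_eq_monomial, map_mul, AdjoinRoot.mk_C, map_pow,
          AdjoinRoot.mk_X, ← AdjoinRoot.algebraMap_eq, map_mul, map_mul, map_pow, map_pow,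
          key1]
        show _ * ψ (φ y) ^ m = _ * y ^ m
        rw [key2]
  exact ⟨(AlgEquiv.ofAlgHom ψ φ hcomp2 hcomp1).toRingEquiv⟩
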